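/- Let A₁ and A₂ be selfadjoint N×N Hermitian matrices (over ℂ, with respect to the standard inner product) such that the subspace D = {x ∈ ℂᴺ : A₁x = A₂x} has codimension n. Then for every open real interval Δ, the total number of eigenvalues (counted with multiplicity) of A₁ in Δ and of A₂ in Δ differ by at most n. -/

import Mathlib

open Matrix

section Stmt8Aux

open Module Submodule

variable {N : ℕ}

private lemma stmt8_repr_toEuclideanLin {A : Matrix (Fin N) (Fin N) ℂ} (hA : A.IsHermitian)
    (x : EuclideanSpace ℂ (Fin N)) (i : Fin N) :
    hA.eigenvectorBasis.repr (Matrix.toEuclideanLin A x) i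
      = (hA.eigenvalues i : ℂ) * hA.eigenvectorBasis.repr x i := by
  have hsym := Matrix.isHermitian_iff_isSymmetric.1 hA
  have hb : Matrix.toEuclideanLin A (hA.eigenvectorBasis i)
      = (hA.eigenvalues i : ℂ) • hA.eigenvectorBasis i := by
    ext j
    have := congrFun (hA.mulVec_eigenvectorBasis i) j
    simpa [Matrix.toEuclideanLin_apply, Complex.real_smul] using this
  rw [OrthonormalBasis.repr_apply_apply, OrthonormalBasis.repr_apply_apply,
    ← hsym (hA.eigenvectorBasis i) x, hb, inner_smul_left, Complex.conj_ofReal]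

private lemma stmt8_quad_eq {A : Matrix (Fin N) (Fin N) ℂ} (hA : A.IsHermitian)
    (a b : ℝ) (x : EuclideanSpace ℂ (Fin N)) :
    (inner ℂ (Matrix.toEuclideanLin A x - (a : ℂ) • x)
        (Matrix.toEuclideanLin A x - (b : ℂ) • x) : ℂ)
      = ((∑ i, (hA.eigenvalues i - a) * (hA.eigenvalues i - b)
          * ‖hA.eigenvectorBasis.repr x i‖ ^ 2 : ℝ) : ℂ) := by
  set B := hA.eigenvectorBasis
  rw [← B.repr.inner_map_map, map_sub, map_sub, _root_.map_smul, _root_.map_smul,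
    PiLp.inner_apply]
  push_cast
  refine Finset.sum_congr rfl fun i _ => ?_
  have h1 : (B.repr (Matrix.toEuclideanLin A x) - (a : ℂ) • B.repr x) i
      = ((hA.eigenvalues i : ℂ) - a) * B.repr x i := by
    simp [stmt8_repr_toEuclideanLin hA x i, sub_mul]
    exact stmt8_repr_toEuclideanLin hA x i
  have h2 : (B.repr (Matrix.toEuclideanLin A x) - (b : ℂ) • B.repr x) i
      = ((hA.eigenvalues i : ℂ) - b) * B.repr x i := by
    simp [stmt8_repr_toEuclideanLin hA x i, sub_mul]
    exact stmt8_repr_toEuclideanLin hA x i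
  rw [h1, h2, RCLike.inner_apply]
  rw [map_mul (starRingEnd ℂ), map_sub, Complex.conj_ofReal, Complex.conj_ofReal]
  rw [mul_mul_mul_comm, Complex.mul_conj']; ring

private lemma stmt8_finrank_span (b : OrthonormalBasis (Fin N) ℂ (EuclideanSpace ℂ (Fin N)))
    (s : Finset (Fin N)) :
    finrank ℂ (span ℂ (⇑b '' ↑s)) = s.card := by
  have hli : LinearIndependent ℂ (fun i : {x // x ∈ s} => b i) :=
    b.orthonormal.linearIndependent.comp _ Subtype.val_injective
  have himg : ⇑b '' ↑s = Set.range (fun i : {x // x ∈ s} => b i) := by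
    simp [Set.image_eq_range]
  rw [himg, finrank_span_eq_card hli, Fintype.card_coe]

private lemma stmt8_repr_zero (b : OrthonormalBasis (Fin N) ℂ (EuclideanSpace ℂ (Fin N)))
    {s : Finset (Fin N)} {x : EuclideanSpace ℂ (Fin N)}
    (hx : x ∈ span ℂ (⇑b '' ↑s)) {i : Fin N} (hi : i ∉ s) : b.repr x i = 0 := by
  rw [← b.coe_toBasis] at hx
  have hsupp := (b.toBasis.mem_span_image).1 hx
  by_contra h
  exact hi (hsupp (by simp [Finsupp.mem_support_iff, b.coe_toBasis_repr_apply, h]))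

private lemma stmt8_exists_repr_ne_zero
    (b : OrthonormalBasis (Fin N) ℂ (EuclideanSpace ℂ (Fin N)))
    {x : EuclideanSpace ℂ (Fin N)} (hx : x ≠ 0) : ∃ i, b.repr x i ≠ 0 := by
  by_contra h
  push_neg at h
  apply hx
  have h0 : b.repr x = 0 := by ext i; exact h i
  simpa using congrArg b.repr.symm h0

set_option maxHeartbeats 1600000 in
open scoped Classical in
private lemma stmt8_key (A₁ A₂ : Matrix (Fin N) (Fin N) ℂ)
    (h₁ : A₁.IsHermitian) (h₂ : A₂.IsHermitian)
    (D : Submodule ℂ (EuclideanSpace ℂ (Fin N)))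
    (hD : ∀ x ∈ D, Matrix.toEuclideanLin A₁ x = Matrix.toEuclideanLin A₂ x)
    (n : ℕ) (hDrank : N ≤ finrank ℂ D + n)
    (Δ : Set ℝ) (hΔconn : Δ.OrdConnected) :
    (Finset.univ.filter fun i => h₁.eigenvalues i ∈ Δ).card ≤
      (Finset.univ.filter fun i => h₂.eigenvalues i ∈ Δ).card + n := by
  by_contra hcon
  push_neg at hcon
  set s₁ := Finset.univ.filter (fun i => h₁.eigenvalues i ∈ Δ) with hs₁def
  set s₂ := Finset.univ.filter (fun i => h₂.eigenvalues i ∉ Δ) with hs₂def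
  have hcard2 : (Finset.univ.filter fun i => h₂.eigenvalues i ∈ Δ).card + s₂.card = N := by
    simpa using Finset.card_filter_add_card_filter_not
      (s := Finset.univ) (p := fun i => h₂.eigenvalues i ∈ Δ)
  set V := span ℂ (⇑h₁.eigenvectorBasis '' ↑s₁) with hVdef
  set W := span ℂ (⇑h₂.eigenvectorBasis '' ↑s₂) with hWdef
  have hV : finrank ℂ V = s₁.card := stmt8_finrank_span _ _
  have hW : finrank ℂ W = s₂.card := stmt8_finrank_span _ _
  have hdimE : finrank ℂ (EuclideanSpace ℂ (Fin N)) = N := by simp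
  have hint : ∀ (U U' : Submodule ℂ (EuclideanSpace ℂ (Fin N))),
      finrank ℂ U + finrank ℂ U' ≤ finrank ℂ (U ⊓ U' : Submodule ℂ _) + N := by
    intro U U'
    have h := Submodule.finrank_sup_add_finrank_inf_eq U U'
    have h2 := Submodule.finrank_le (U ⊔ U')
    rw [hdimE] at h2
    omega
  have hVW := hint V W
  have hVWD := hint (V ⊓ W) D
  have hDle := Submodule.finrank_le D
  rw [hdimE] at hDle
  have hpos : 0 < finrank ℂ (V ⊓ W ⊓ D : Submodule ℂ (EuclideanSpace ℂ (Fin N))) := by omega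
  have : Nontrivial ↥(V ⊓ W ⊓ D) := Module.nontrivial_of_finrank_pos hpos
  obtain ⟨y, hy⟩ := exists_ne (0 : ↥(V ⊓ W ⊓ D))
  have hxne : (y : EuclideanSpace ℂ (Fin N)) ≠ 0 := by
    simpa [Submodule.coe_eq_zero] using hy
  set x : EuclideanSpace ℂ (Fin N) := ↑y with hxdef
  have hxV : x ∈ V := y.2.1.1
  have hxW : x ∈ W := y.2.1.2
  have hxD : x ∈ D := y.2.2
  -- choose separating points a < b
  have hs1ne : s₁.Nonempty := Finset.card_pos.1 (by omega)
  obtain ⟨i₀, hi₀⟩ := hs1ne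
  have hμ₀ : h₁.eigenvalues i₀ ∈ Δ := (Finset.mem_filter.1 hi₀).2
  set μ₀ := h₁.eigenvalues i₀ with hμ₀def
  set T := s₂.image h₂.eigenvalues with hTdef
  set P := s₁.image h₁.eigenvalues with hPdef
  have hPne : P.Nonempty := ⟨μ₀, Finset.mem_image_of_mem _ hi₀⟩
  set Tlo := T.filter (· < μ₀) with hTlodef
  set Thi := T.filter (fun t => μ₀ < t) with hThidef
  set a := if h : Tlo.Nonempty then Tlo.max' h else P.min' hPne - 1 with ha_def
  set b := if h : Thi.Nonempty then Thi.min' h else P.max' hPne + 1 with hb_def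
  have hTnotΔ : ∀ t ∈ T, t ∉ Δ := by
    intro t ht
    obtain ⟨j, hj, rfl⟩ := Finset.mem_image.1 ht
    exact (Finset.mem_filter.1 hj).2
  have hPΔ : ∀ r ∈ P, r ∈ Δ := by
    intro r hr
    obtain ⟨i, hi, rfl⟩ := Finset.mem_image.1 hr
    exact (Finset.mem_filter.1 hi).2
  have ha_lt : ∀ r ∈ P, a < r := by
    intro r hr
    have hrΔ := hPΔ r hr
    rw [ha_def]
    split_ifs with h
    · have hmem := Finset.mem_filter.1 (Tlo.max'_mem h)
      have htΔ : Tlo.max' h ∉ Δ := hTnotΔ _ hmem.1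
      by_contra hle
      push_neg at hle
      exact htΔ (hΔconn.out hrΔ hμ₀ ⟨hle, hmem.2.le⟩)
    · have := P.min'_le r hr; linarith
  have hb_gt : ∀ r ∈ P, r < b := by
    intro r hr
    have hrΔ := hPΔ r hr
    rw [hb_def]
    split_ifs with h
    · have hmem := Finset.mem_filter.1 (Thi.min'_mem h)
      have htΔ : Thi.min' h ∉ Δ := hTnotΔ _ hmem.1
      by_contra hle
      push_neg at hle
      exact htΔ (hΔconn.out hμ₀ hrΔ ⟨hmem.2.le, hle⟩)
    · have := P.le_max' r hr; linarith
  have hμ₀P : μ₀ ∈ P := Finset.mem_image_of_mem _ hi₀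
  have haμ : a < μ₀ := ha_lt _ hμ₀P
  have hμb : μ₀ < b := hb_gt _ hμ₀P
  have hsep : ∀ t ∈ T, t ≤ a ∨ b ≤ t := by
    intro t ht
    have htΔ := hTnotΔ t ht
    rcases lt_trichotomy t μ₀ with hlt | heq | hgt
    · left
      have hmem : t ∈ Tlo := Finset.mem_filter.2 ⟨ht, hlt⟩
      rw [ha_def, dif_pos ⟨t, hmem⟩]
      exact Finset.le_max' _ t hmem
    · exact absurd (heq ▸ hμ₀) htΔ
    · right
      have hmem : t ∈ Thi := Finset.mem_filter.2 ⟨ht, hgt⟩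
      rw [hb_def, dif_pos ⟨t, hmem⟩]
      exact Finset.min'_le _ t hmem
  -- the two quadratic sums
  set S₁ := ∑ i, (h₁.eigenvalues i - a) * (h₁.eigenvalues i - b)
      * ‖h₁.eigenvectorBasis.repr x i‖ ^ 2 with hS₁def
  set S₂ := ∑ i, (h₂.eigenvalues i - a) * (h₂.eigenvalues i - b)
      * ‖h₂.eigenvectorBasis.repr x i‖ ^ 2 with hS₂def
  have hSeq : S₁ = S₂ := by
    have hc : ((S₁ : ℝ) : ℂ) = ((S₂ : ℝ) : ℂ) := by
      rw [← stmt8_quad_eq h₁ a b x, ← stmt8_quad_eq h₂ a b x, hD x hxD]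
    exact_mod_cast hc
  have hS₁neg : S₁ < 0 := by
    obtain ⟨i, hi⟩ := stmt8_exists_repr_ne_zero h₁.eigenvectorBasis hxne
    have hiS : i ∈ s₁ := by
      by_contra h
      exact hi (stmt8_repr_zero _ hxV h)
    have hterm : ∀ j ∈ Finset.univ, (h₁.eigenvalues j - a) * (h₁.eigenvalues j - b)
        * ‖h₁.eigenvectorBasis.repr x j‖ ^ 2 ≤ 0 := by
      intro j _
      by_cases hj : h₁.eigenvectorBasis.repr x j = 0
      · simp [hj]
      · have hjS : j ∈ s₁ := by
          by_contra h
          exact hj (stmt8_repr_zero _ hxV h)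
        have hjP : h₁.eigenvalues j ∈ P := Finset.mem_image_of_mem _ hjS
        have hfac : (h₁.eigenvalues j - a) * (h₁.eigenvalues j - b) < 0 :=
          mul_neg_of_pos_of_neg (by have := ha_lt _ hjP; linarith)
            (by have := hb_gt _ hjP; linarith)
        exact mul_nonpos_of_nonpos_of_nonneg hfac.le (by positivity)
    have hstrict : (h₁.eigenvalues i - a) * (h₁.eigenvalues i - b)
        * ‖h₁.eigenvectorBasis.repr x i‖ ^ 2 < 0 := by
      have hiP : h₁.eigenvalues i ∈ P := Finset.mem_image_of_mem _ hiS
      have hfac : (h₁.eigenvalues i - a) * (h₁.eigenvalues i - b) < 0 :=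
        mul_neg_of_pos_of_neg (by have := ha_lt _ hiP; linarith)
          (by have := hb_gt _ hiP; linarith)
      have hnorm : (0:ℝ) < ‖h₁.eigenvectorBasis.repr x i‖ ^ 2 :=
        pow_pos (norm_pos_iff.mpr hi) 2
      exact mul_neg_of_neg_of_pos hfac hnorm
    calc S₁ < ∑ _j : Fin N, (0:ℝ) :=
          Finset.sum_lt_sum hterm ⟨i, Finset.mem_univ i, hstrict⟩
      _ = 0 := by simp
  have hS₂nonneg : 0 ≤ S₂ := by
    apply Finset.sum_nonneg
    intro j _
    by_cases hj : h₂.eigenvectorBasis.repr x j = 0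
    · simp [hj]
    · have hjS : j ∈ s₂ := by
        by_contra h
        exact hj (stmt8_repr_zero _ hxW h)
      have hjT : h₂.eigenvalues j ∈ T := Finset.mem_image_of_mem _ hjS
      have hfac : 0 ≤ (h₂.eigenvalues j - a) * (h₂.eigenvalues j - b) := by
        rcases hsep _ hjT with hle | hge
        · have h1 : h₂.eigenvalues j - a ≤ 0 := by linarith
          have h2 : h₂.eigenvalues j - b ≤ 0 := by linarith
          nlinarith
        · exact mul_nonneg (by linarith) (by linarith)
      exact mul_nonneg hfac (pow_nonneg (norm_nonneg _) 2)
  linarith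

end Stmt8Aux

open scoped Classical in
theorem stmt8 {N : ℕ} (A₁ A₂ : Matrix (Fin N) (Fin N) ℂ)
    (h₁ : A₁.IsHermitian) (h₂ : A₂.IsHermitian) (n : ℕ)
    (hn : N - Module.finrank ℂ (LinearMap.ker (Matrix.toLin' (A₁ - A₂))) = n)
    (Δ : Set ℝ) (hΔopen : IsOpen Δ) (hΔconn : Δ.OrdConnected) :
    ((Finset.univ.filter fun i => h₁.eigenvalues i ∈ Δ).card : ℤ) -
      (Finset.univ.filter fun i => h₂.eigenvalues i ∈ Δ).card ∈ Set.Icc (-(n : ℤ)) n := by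
  set e : (Fin N → ℂ) ≃ₗ[ℂ] EuclideanSpace ℂ (Fin N) := (WithLp.linearEquiv 2 ℂ (Fin N → ℂ)).symm with he
  set D : Submodule ℂ (EuclideanSpace ℂ (Fin N)) :=
    Submodule.map (e : (Fin N → ℂ) →ₗ[ℂ] EuclideanSpace ℂ (Fin N)) (LinearMap.ker (Matrix.toLin' (A₁ - A₂))) with hDdef
  have hDrank : Module.finrank ℂ D
      = Module.finrank ℂ (LinearMap.ker (Matrix.toLin' (A₁ - A₂))) :=
    LinearEquiv.finrank_map_eq _ _
  have hD : ∀ x ∈ D, Matrix.toEuclideanLin A₁ x = Matrix.toEuclideanLin A₂ x := by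
    intro x hx
    rw [hDdef, Submodule.mem_map] at hx
    obtain ⟨z, hz, rfl⟩ := hx
    rw [LinearMap.mem_ker] at hz
    have hsub : Matrix.toEuclideanLin (A₁ - A₂) (e z) = 0 := by
      have : Matrix.toEuclideanLin (A₁ - A₂) (e z)
          = e (Matrix.toLin' (A₁ - A₂) z) := rfl
      rw [this, hz, map_zero]
    have := map_sub Matrix.toEuclideanLin A₁ A₂
    rw [this, LinearMap.sub_apply] at hsub
    exact sub_eq_zero.1 hsub
  have hN : N ≤ Module.finrank ℂ D + n := by rw [hDrank]; omega
  have k12 := stmt8_key A₁ A₂ h₁ h₂ D hD n hN Δ hΔconn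
  have k21 := stmt8_key A₂ A₁ h₂ h₁ D (fun x hx => (hD x hx).symm) n hN Δ hΔconn
  simp only [Set.mem_Icc]
  refine ⟨?_, ?_⟩ <;> omega
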